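/- Let ρ > 0 and n ∈ ℤ be fixed. For α > 0 define two probability mass functions on ℤ: π_α(k) = e^{-2(α+ρ)} (2(α+ρ))^k / (k! (1 - e^{-2(α+ρ)})) for integers k ≥ 1 and π_α(k) = 0 otherwise (the Poisson distribution with parameter 2(α+ρ) conditioned to be positive), and ψ_α(k) = e^{-2α} (2α)^{k-n} / ((k-n)!) for integers k ≥ n and ψ_α(k) = 0 otherwise (the Poisson distribution with parameter 2α shifted by n). Then the total variation distance between them tends to zero: lim_{α → ∞} ∑_{k ∈ ℤ} |π_α(k) - ψ_α(k)| = 0. -/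

import Mathlib

open Filter Real

noncomputable def pois (r : ℝ) (k : ℕ) : ℝ := Real.exp (-r) * r ^ k / (Nat.factorial k : ℝ)

lemma pois_nonneg {r : ℝ} (hr : 0 ≤ r) (k : ℕ) : 0 ≤ pois r k := by
  unfold pois; positivity

lemma hasSum_pois {r : ℝ} (hr : 0 ≤ r) : HasSum (pois r) 1 := by
  unfold pois
  apply (hasSum_mul_left_iff (Real.exp_ne_zero r)).mp
  simp only [mul_one]
  have : (fun i ↦ rexp r * (rexp (-r) * r ^ i / ↑(Nat.factorial i))) =
      fun i ↦ r ^ i / ↑(Nat.factorial i) := by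
    ext n
    rw [mul_div_assoc, Real.exp_neg, ← mul_assoc, ← div_eq_mul_inv,
      div_self (Real.exp_ne_zero r), one_mul]
  rw [this, Real.exp_eq_exp_ℝ]
  exact NormedSpace.expSeries_div_hasSum_exp r

lemma pois_succ (r : ℝ) (k : ℕ) : ((k : ℝ) + 1) * pois r (k + 1) = r * pois r k := by
  unfold pois
  rw [Nat.factorial_succ, pow_succ]
  push_cast
  have h1 : (Nat.factorial k : ℝ) ≠ 0 := Nat.cast_ne_zero.mpr (Nat.factorial_ne_zero k)
  field_simp

lemma hasSum_mul_pois {r : ℝ} (hr : 0 ≤ r) : HasSum (fun k : ℕ => (k : ℝ) * pois r k) r := by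
  have h0 : HasSum (fun k : ℕ => r * pois r k) r := by
    simpa using (hasSum_pois hr).mul_left r
  have h1 : HasSum (fun k : ℕ => ((k : ℝ) + 1) * pois r (k + 1)) r := by
    have := funext (pois_succ r)
    rw [this]; exact h0
  have h2 : HasSum (fun k : ℕ => ((k + 1 : ℕ) : ℝ) * pois r (k + 1)) r := by
    push_cast; exact h1
  have h3 : HasSum (fun k : ℕ => (k : ℝ) * pois r k)
      (r + ∑ i ∈ Finset.range 1, (i : ℝ) * pois r i) := (hasSum_nat_add_iff 1).mp h2
  simpa using h3

lemma hasSum_sq_pois {r : ℝ} (hr : 0 ≤ r) :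
    HasSum (fun k : ℕ => (k : ℝ) * ((k : ℝ) - 1) * pois r k) (r ^ 2) := by
  have h0 : HasSum (fun k : ℕ => r * ((k : ℝ) * pois r k)) (r * r) := (hasSum_mul_pois hr).mul_left r
  have h1 : HasSum (fun k : ℕ => ((k + 1 : ℕ) : ℝ) * (((k + 1 : ℕ) : ℝ) - 1) * pois r (k + 1))
      (r ^ 2) := by
    have : (fun k : ℕ => ((k + 1 : ℕ) : ℝ) * (((k + 1 : ℕ) : ℝ) - 1) * pois r (k + 1)) =
        fun k : ℕ => r * ((k : ℝ) * pois r k) := by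
      ext k
      push_cast
      have := pois_succ r k
      nlinarith [pois_succ r k]
    rw [this, sq]; exact h0
  have h3 : HasSum (fun k : ℕ => (k : ℝ) * ((k : ℝ) - 1) * pois r k)
      (r ^ 2 + ∑ i ∈ Finset.range 1, (i : ℝ) * ((i : ℝ) - 1) * pois r i) :=
    (hasSum_nat_add_iff 1).mp h1
  simpa using h3

lemma hasSum_centered_pois {r : ℝ} (hr : 0 ≤ r) :
    HasSum (fun k : ℕ => ((k : ℝ) - r) ^ 2 * pois r k) r := by
  have h1 := hasSum_sq_pois hr
  have h2 := (hasSum_mul_pois hr).mul_left (1 - 2 * r)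
  have h3 := (hasSum_pois hr).mul_left (r ^ 2)
  have h := (h1.add h2).add h3
  have he : (fun k : ℕ => ((k : ℝ) * ((k : ℝ) - 1) * pois r k +
      (1 - 2 * r) * ((k : ℝ) * pois r k)) + r ^ 2 * pois r k) =
      fun k : ℕ => ((k : ℝ) - r) ^ 2 * pois r k := by
    ext k; ring
  rw [he] at h
  have : r ^ 2 + (1 - 2 * r) * r + r ^ 2 * 1 = r := by ring
  rwa [this] at h

lemma abs_dev_le {r : ℝ} (hr : 0 < r) (k : ℕ) :
    |(k : ℝ) - r| * pois r k ≤
      ((r + ((k : ℝ) - r) ^ 2) / (2 * Real.sqrt r)) * pois r k := by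
  have hs : 0 < Real.sqrt r := Real.sqrt_pos.mpr hr
  have key : 2 * Real.sqrt r * |(k : ℝ) - r| ≤ r + ((k : ℝ) - r) ^ 2 := by
    nlinarith [sq_nonneg (|(k : ℝ) - r| - Real.sqrt r), sq_abs ((k : ℝ) - r),
      Real.sq_sqrt hr.le]
  have hx : |(k : ℝ) - r| ≤ (r + ((k : ℝ) - r) ^ 2) / (2 * Real.sqrt r) := by
    rw [le_div_iff₀ (by positivity)]
    linarith [key]
  exact mul_le_mul_of_nonneg_right hx (pois_nonneg hr.le k)

lemma hasSum_bound_dev {r : ℝ} (hr : 0 < r) :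
    HasSum (fun k : ℕ => ((r + ((k : ℝ) - r) ^ 2) / (2 * Real.sqrt r)) * pois r k)
      (Real.sqrt r) := by
  have hs : 0 < Real.sqrt r := Real.sqrt_pos.mpr hr
  have h1 := ((hasSum_pois hr.le).mul_left r).add (hasSum_centered_pois hr.le)
  have h2 := h1.div_const (2 * Real.sqrt r)
  have he : (fun k : ℕ => (r * pois r k + ((k : ℝ) - r) ^ 2 * pois r k) / (2 * Real.sqrt r)) =
      fun k : ℕ => ((r + ((k : ℝ) - r) ^ 2) / (2 * Real.sqrt r)) * pois r k := by
    ext k; ring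
  rw [he] at h2
  have hv : (r * 1 + r) / (2 * Real.sqrt r) = Real.sqrt r := by
    rw [mul_one]
    rw [show r + r = 2 * r by ring]
    rw [mul_div_mul_left _ _ (two_ne_zero)]
    exact Real.div_sqrt
  rwa [hv] at h2

lemma summable_abs_dev {r : ℝ} (hr : 0 < r) :
    Summable (fun k : ℕ => |(k : ℝ) - r| * pois r k) := by
  refine Summable.of_nonneg_of_le (fun k => mul_nonneg (abs_nonneg _) (pois_nonneg hr.le k)) (fun k => abs_dev_le hr k)
    (hasSum_bound_dev hr).summable

lemma tsum_abs_dev_le {r : ℝ} (hr : 0 < r) :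
    ∑' k : ℕ, |(k : ℝ) - r| * pois r k ≤ Real.sqrt r := by
  calc ∑' k : ℕ, |(k : ℝ) - r| * pois r k
      ≤ ∑' k : ℕ, ((r + ((k : ℝ) - r) ^ 2) / (2 * Real.sqrt r)) * pois r k :=
        Summable.tsum_le_tsum (fun k => abs_dev_le hr k) (summable_abs_dev hr)
          (hasSum_bound_dev hr).summable
    _ = Real.sqrt r := (hasSum_bound_dev hr).tsum_eq

noncomputable def liftZ (h : ℕ → ℝ) : ℤ → ℝ := fun k => if 0 ≤ k then h k.toNat else 0

noncomputable def pz (r : ℝ) : ℤ → ℝ := liftZ (pois r)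

lemma pz_nonneg {r : ℝ} (hr : 0 ≤ r) (k : ℤ) : 0 ≤ pz r k := by
  unfold pz liftZ
  split
  · exact pois_nonneg hr _
  · exact le_rfl

lemma hasSum_liftZ {h : ℕ → ℝ} {a : ℝ} (hh : HasSum h a) : HasSum (liftZ h) a := by
  have hinj : Function.Injective (fun m : ℕ => (m : ℤ)) := fun a b hab => Nat.cast_injective hab
  rw [← Function.Injective.hasSum_iff hinj]
  · have : (liftZ h) ∘ (fun m : ℕ => (m : ℤ)) = h := by
      ext m; simp [liftZ]
    rwa [this]
  · intro x hx
    rw [liftZ, if_neg]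
    intro h0
    exact hx ⟨x.toNat, Int.toNat_of_nonneg h0⟩

lemma hasSum_pz {r : ℝ} (hr : 0 ≤ r) : HasSum (pz r) 1 := hasSum_liftZ (hasSum_pois hr)

lemma summable_pz {r : ℝ} (hr : 0 ≤ r) : Summable (pz r) := (hasSum_pz hr).summable

lemma summable_shift {g : ℤ → ℝ} (hg : Summable g) (j : ℤ) :
    Summable (fun k : ℤ => g (k - j)) :=
  ((Equiv.subRight j).summable_iff (f := g)).mpr hg

lemma tsum_shift (g : ℤ → ℝ) (j : ℤ) : ∑' k : ℤ, g (k - j) = ∑' k : ℤ, g k :=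
  (Equiv.subRight j).tsum_eq g

lemma pois_pred {r : ℝ} {m : ℕ} (hm : 1 ≤ m) : pois r (m - 1) * r = (m : ℝ) * pois r m := by
  obtain ⟨j, rfl⟩ := Nat.exists_eq_add_of_le hm
  have := pois_succ r j
  simp only [Nat.add_sub_cancel_left, add_comm 1 j] at *
  push_cast
  push_cast at this
  linarith [this]

lemma dstep_eq {r : ℝ} (hr : 0 < r) (k : ℤ) :
    |pz r k - pz r (k - 1)| = liftZ (fun m : ℕ => |(m : ℝ) - r| * pois r m / r) k := by
  unfold pz liftZ
  by_cases h0 : 0 ≤ k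
  · rw [if_pos h0]
    by_cases h1 : 1 ≤ k
    · rw [if_pos (by omega : (0 : ℤ) ≤ k - 1)]
      have hkm : (k - 1).toNat = k.toNat - 1 := by omega
      have hm1 : 1 ≤ k.toNat := by omega
      rw [hkm]
      set m := k.toNat with hm
      have hp := pois_pred (r := r) hm1
      have hdiff : pois r m - pois r (m - 1) = pois r m * (r - (m : ℝ)) / r := by
        rw [eq_div_iff hr.ne']
        linear_combination -hp
      rw [hdiff, abs_div, abs_of_pos hr, abs_mul, abs_of_nonneg (pois_nonneg hr.le m),
        abs_sub_comm r, mul_comm, if_pos h0]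
    · have hk0 : k = 0 := le_antisymm (by omega) h0
      subst hk0
      rw [if_neg (by omega : ¬ (0 : ℤ) ≤ 0 - 1)]
      simp only [Int.toNat_zero, Nat.cast_zero, zero_sub, abs_neg, abs_of_pos hr, sub_zero]
      rw [abs_of_nonneg (pois_nonneg hr.le 0)]
      field_simp
      simp
  · rw [if_neg h0, if_neg (by omega : ¬ (0 : ℤ) ≤ k - 1), if_neg h0]
    simp

lemma hasSum_dstep {r : ℝ} (hr : 0 < r) :
    HasSum (fun k : ℤ => |pz r k - pz r (k - 1)|)
      (∑' m : ℕ, |(m : ℝ) - r| * pois r m / r) := by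
  have hs : Summable (fun m : ℕ => |(m : ℝ) - r| * pois r m / r) :=
    (summable_abs_dev hr).div_const r
  have := hasSum_liftZ hs.hasSum
  rwa [show liftZ (fun m : ℕ => |(m : ℝ) - r| * pois r m / r) =
    fun k : ℤ => |pz r k - pz r (k - 1)| from (funext (dstep_eq hr)).symm] at this

lemma summable_dstep {r : ℝ} (hr : 0 < r) :
    Summable (fun k : ℤ => |pz r k - pz r (k - 1)|) := (hasSum_dstep hr).summable

lemma tsum_dstep_le {r : ℝ} (hr : 0 < r) :
    ∑' k : ℤ, |pz r k - pz r (k - 1)| ≤ Real.sqrt r / r := by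
  rw [(hasSum_dstep hr).tsum_eq, tsum_div_const]
  gcongr
  exact tsum_abs_dev_le hr

lemma summable_absdiff {r : ℝ} (hr : 0 ≤ r) (a b : ℤ) :
    Summable (fun k : ℤ => |pz r (k - a) - pz r (k - b)|) := by
  refine Summable.of_nonneg_of_le (fun k => abs_nonneg _) (fun k => ?_)
    ((summable_shift (summable_pz hr) a).add (summable_shift (summable_pz hr) b))
  calc |pz r (k - a) - pz r (k - b)| ≤ |pz r (k - a)| + |pz r (k - b)| := abs_sub _ _
    _ = pz r (k - a) + pz r (k - b) := by
        rw [abs_of_nonneg (pz_nonneg hr _), abs_of_nonneg (pz_nonneg hr _)]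

lemma summable_absdiff' {r : ℝ} (hr : 0 ≤ r) (a : ℤ) :
    Summable (fun k : ℤ => |pz r (k - a) - pz r k|) := by
  have := summable_absdiff hr a 0
  simpa using this

lemma tsum_Dnat {r : ℝ} (hr : 0 < r) (m : ℕ) :
    ∑' k : ℤ, |pz r (k - (m : ℤ)) - pz r k| ≤ (m : ℝ) * (Real.sqrt r / r) := by
  induction m with
  | zero => simp
  | succ m ih =>
    have hkey : ∀ k : ℤ, k - ((m : ℤ) + 1) = (k - 1) - (m : ℤ) := fun k => by ring
    have h1 : Summable (fun k : ℤ => |pz r ((k - 1) - (m : ℤ)) - pz r (k - 1)|) := by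
      have := summable_shift (summable_absdiff' hr.le (m : ℤ)) 1
      simpa using this
    have h2 := summable_dstep hr
    have h2' : Summable (fun k : ℤ => |pz r (k - 1) - pz r k|) := by
      refine h2.congr fun k => ?_
      rw [abs_sub_comm]
    calc ∑' k : ℤ, |pz r (k - ((m + 1 : ℕ) : ℤ)) - pz r k|
        ≤ ∑' k : ℤ, (|pz r ((k - 1) - (m : ℤ)) - pz r (k - 1)| + |pz r (k - 1) - pz r k|) := by
          refine Summable.tsum_le_tsum (fun k => ?_) ?_ (h1.add h2')
          · push_cast
            rw [hkey k]
            exact abs_sub_le _ _ _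
          · have := summable_absdiff' hr.le ((m + 1 : ℕ) : ℤ)
            exact this
      _ = (∑' k : ℤ, |pz r ((k - 1) - (m : ℤ)) - pz r (k - 1)|) +
          ∑' k : ℤ, |pz r (k - 1) - pz r k| := Summable.tsum_add h1 h2'
      _ = (∑' k : ℤ, |pz r (k - (m : ℤ)) - pz r k|) + ∑' k : ℤ, |pz r k - pz r (k - 1)| := by
          congr 1
          · exact tsum_shift (fun k => |pz r (k - (m : ℤ)) - pz r k|) 1
          · exact tsum_congr fun k => abs_sub_comm _ _
      _ ≤ (m : ℝ) * (Real.sqrt r / r) + Real.sqrt r / r := add_le_add ih (tsum_dstep_le hr)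
      _ = ((m + 1 : ℕ) : ℝ) * (Real.sqrt r / r) := by push_cast; ring

lemma tsum_Dint {r : ℝ} (hr : 0 < r) (j : ℤ) :
    ∑' k : ℤ, |pz r (k - j) - pz r k| ≤ |(j : ℝ)| * (Real.sqrt r / r) := by
  rcases le_total 0 j with hj | hj
  · obtain ⟨m, rfl⟩ := Int.eq_ofNat_of_zero_le hj
    have := tsum_Dnat hr m
    simpa [abs_of_nonneg] using this
  · obtain ⟨m, hm⟩ := Int.eq_ofNat_of_zero_le (neg_nonneg.mpr hj)
    have hj' : j = -(m : ℤ) := by omega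
    subst hj'
    calc ∑' k : ℤ, |pz r (k - (-(m : ℤ))) - pz r k|
        = ∑' k : ℤ, (fun k => |pz r (k - (m : ℤ)) - pz r k|) (k - (-(m : ℤ))) := by
          refine tsum_congr fun k => ?_
          simp only [sub_neg_eq_add, add_sub_cancel_right]
          exact abs_sub_comm _ _
      _ = ∑' k : ℤ, |pz r (k - (m : ℤ)) - pz r k| :=
          tsum_shift (fun k => |pz r (k - (m : ℤ)) - pz r k|) (-(m : ℤ))
      _ ≤ (m : ℝ) * (Real.sqrt r / r) := tsum_Dnat hr m
      _ = |((-(m : ℤ) : ℤ) : ℝ)| * (Real.sqrt r / r) := by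
          push_cast
          rw [abs_neg, abs_of_nonneg (by positivity : (0:ℝ) ≤ (m : ℝ))]

lemma pois_add (a b : ℝ) (m : ℕ) :
    pois (a + b) m = ∑ j ∈ Finset.range (m + 1), pois a j * pois b (m - j) := by
  unfold pois
  rw [add_pow, neg_add, Real.exp_add, Finset.mul_sum, Finset.sum_div]
  refine Finset.sum_congr rfl fun j hj => ?_
  have hj' : j ≤ m := Nat.lt_succ_iff.mp (Finset.mem_range.mp hj)
  have key : ((m.choose j : ℕ) : ℝ) * j.factorial * (m - j).factorial = m.factorial := by
    exact_mod_cast Nat.choose_mul_factorial_mul_factorial hj'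
  have h1 : (j.factorial : ℝ) ≠ 0 := Nat.cast_ne_zero.mpr (Nat.factorial_ne_zero _)
  have h2 : ((m - j).factorial : ℝ) ≠ 0 := Nat.cast_ne_zero.mpr (Nat.factorial_ne_zero _)
  have h3 : (m.factorial : ℝ) ≠ 0 := Nat.cast_ne_zero.mpr (Nat.factorial_ne_zero _)
  field_simp
  linear_combination (a ^ j * b ^ (m - j)) * key

lemma hasSum_conv {c l : ℝ} (k : ℤ) :
    HasSum (fun j : ℕ => pois c j * pz l (k - j)) (pz (c + l) k) := by
  by_cases h0 : 0 ≤ k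
  · obtain ⟨m, rfl⟩ := Int.eq_ofNat_of_zero_le h0
    have heq : pz (c + l) (m : ℤ) = ∑ j ∈ Finset.range (m + 1), pois c j * pz l ((m : ℤ) - j) := by
      simp only [pz, liftZ]
      rw [if_pos (by positivity : (0:ℤ) ≤ (m:ℤ))]
      simp only [Int.toNat_natCast]
      rw [pois_add]
      refine Finset.sum_congr rfl fun j hj => ?_
      have hj' : j ≤ m := Nat.lt_succ_iff.mp (Finset.mem_range.mp hj)
      congr 1
      rw [if_pos (by omega : (0:ℤ) ≤ (m : ℤ) - j)]
      congr 1
      omega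
    rw [heq]
    apply hasSum_sum_of_ne_finset_zero
    intro j hj
    have hjm : m < j := by
      by_contra h
      exact hj (Finset.mem_range.mpr (by omega))
    have : pz l ((m : ℤ) - j) = 0 := by
      simp only [pz, liftZ]
      rw [if_neg (by omega : ¬ (0:ℤ) ≤ (m : ℤ) - j)]
    rw [this, mul_zero]
  · have h1 : pz (c + l) k = 0 := by
      show (if _ then _ else _) = _
      rw [if_neg h0]
    rw [h1]
    convert hasSum_zero with j
    have : pz l (k - j) = 0 := by
      simp only [pz, liftZ]
      rw [if_neg (by omega : ¬ (0:ℤ) ≤ k - j)]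
    rw [this, mul_zero]

lemma pz_le_one {r : ℝ} (hr : 0 ≤ r) (k : ℤ) : pz r k ≤ 1 :=
  le_hasSum (hasSum_pz hr) k (fun j _ => pz_nonneg hr j)

lemma summable_pdiff {a b : ℝ} (ha : 0 ≤ a) (hb : 0 ≤ b) :
    Summable (fun k : ℤ => |pz a k - pz b k|) := by
  refine Summable.of_nonneg_of_le (fun k => abs_nonneg _) (fun k => ?_)
    ((summable_pz ha).add (summable_pz hb))
  calc |pz a k - pz b k| ≤ |pz a k| + |pz b k| := abs_sub _ _
    _ = pz a k + pz b k := by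
        rw [abs_of_nonneg (pz_nonneg ha _), abs_of_nonneg (pz_nonneg hb _)]

lemma tsum_param_le {c l : ℝ} (hc : 0 ≤ c) (hl : 0 < l) :
    ∑' k : ℤ, |pz (c + l) k - pz l k| ≤ c * (Real.sqrt l / l) := by
  set t : ℝ := Real.sqrt l / l with ht
  have htpos : 0 ≤ t := by positivity
  set F : ℕ → ℤ → ℝ := fun j k => pois c j * |pz l (k - j) - pz l k| with hF
  have hFnn : ∀ j k, 0 ≤ F j k := fun j k => mul_nonneg (pois_nonneg hc j) (abs_nonneg _)
  have hslice : ∀ j : ℕ, Summable (F j) := fun j =>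
    (summable_absdiff' hl.le (j : ℤ)).mul_left (pois c j)
  have hrow_le : ∀ j : ℕ, ∑' k : ℤ, F j k ≤ (j : ℝ) * pois c j * t := by
    intro j
    rw [hF]
    simp only
    rw [tsum_mul_left]
    calc pois c j * ∑' k : ℤ, |pz l (k - (j:ℤ)) - pz l k|
        ≤ pois c j * (|((j:ℤ) : ℝ)| * t) :=
          mul_le_mul_of_nonneg_left (tsum_Dint hl (j : ℤ)) (pois_nonneg hc j)
      _ = (j : ℝ) * pois c j * t := by
          push_cast
          rw [abs_of_nonneg (by positivity : (0:ℝ) ≤ (j : ℝ))]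
          ring
  have hmaj : Summable (fun j : ℕ => (j : ℝ) * pois c j * t) :=
    ((hasSum_mul_pois hc).summable).mul_right t
  have hrowsum : Summable (fun j : ℕ => ∑' k : ℤ, F j k) :=
    Summable.of_nonneg_of_le (fun j => tsum_nonneg (fun k => hFnn j k)) hrow_le hmaj
  have hunc : Summable (Function.uncurry F) := by
    refine (summable_prod_of_nonneg ?_).mpr ⟨hslice, hrowsum⟩
    intro p
    exact hFnn p.1 p.2
  have hcol : Summable (fun k : ℤ => ∑' j : ℕ, F j k) := by
    have hswap : Summable (fun p : ℤ × ℕ => Function.uncurry F p.swap) := hunc.prod_symm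
    have := (summable_prod_of_nonneg (fun p : ℤ × ℕ => hFnn p.2 p.1)).mp hswap
    exact this.2
  have hjsum : ∀ k : ℤ, Summable (fun j : ℕ => F j k) := by
    intro k
    refine Summable.of_nonneg_of_le (fun j => hFnn j k) (fun j => ?_)
      (((hasSum_pois hc).summable).mul_right 2)
    refine mul_le_mul_of_nonneg_left ?_ (pois_nonneg hc j)
    calc |pz l (k - (j:ℤ)) - pz l k| ≤ |pz l (k - (j:ℤ))| + |pz l k| := abs_sub _ _
      _ ≤ 1 + 1 := by
          rw [abs_of_nonneg (pz_nonneg hl.le _), abs_of_nonneg (pz_nonneg hl.le _)]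
          exact add_le_add (pz_le_one hl.le _) (pz_le_one hl.le _)
      _ = 2 := by norm_num
  have hpoint : ∀ k : ℤ, |pz (c + l) k - pz l k| ≤ ∑' j : ℕ, F j k := by
    intro k
    have hs1 := hasSum_conv (c := c) (l := l) k
    have hs2 : HasSum (fun j : ℕ => pois c j * pz l k) (pz l k) := by
      simpa using (hasSum_pois hc).mul_right (pz l k)
    have hs3 := hs1.sub hs2
    rw [← hs3.tsum_eq]
    calc |∑' j : ℕ, (pois c j * pz l (k - j) - pois c j * pz l k)|
        ≤ ∑' j : ℕ, ‖pois c j * pz l (k - j) - pois c j * pz l k‖ := by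
          rw [← Real.norm_eq_abs]
          apply norm_tsum_le_tsum_norm
          refine (hjsum k).congr fun j => ?_
          rw [hF]
          simp only
          rw [← mul_sub, Real.norm_eq_abs, abs_mul, abs_of_nonneg (pois_nonneg hc j)]
      _ = ∑' j : ℕ, F j k := by
          refine tsum_congr fun j => ?_
          rw [Real.norm_eq_abs, ← mul_sub, abs_mul, abs_of_nonneg (pois_nonneg hc j)]
  calc ∑' k : ℤ, |pz (c + l) k - pz l k|
      ≤ ∑' k : ℤ, ∑' j : ℕ, F j k :=
        Summable.tsum_le_tsum hpoint (summable_pdiff (by positivity) hl.le) hcol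
    _ = ∑' j : ℕ, ∑' k : ℤ, F j k := Summable.tsum_comm' hunc hslice hjsum
    _ ≤ ∑' j : ℕ, (j : ℝ) * pois c j * t := Summable.tsum_le_tsum hrow_le hrowsum hmaj
    _ = c * t := by
        rw [show (fun j : ℕ => (j : ℝ) * pois c j * t) = fun j : ℕ => ((j : ℝ) * pois c j) * t
          from rfl, tsum_mul_right, (hasSum_mul_pois hc).tsum_eq]

lemma main_bound {c l : ℝ} (hc : 0 < c) (hl : 0 < l) (n : ℤ) :
    ∑' k : ℤ, |(if 1 ≤ k then pz (c + l) k else 0) / (1 - Real.exp (-(c + l))) - pz l (k - n)|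
      ≤ (1 / (1 - Real.exp (-(c + l))) - 1) + Real.exp (-(c + l))
        + (c + |(n : ℝ)|) * (Real.sqrt l / l) := by
  set μ := c + l with hμdef
  set Z := 1 - Real.exp (-μ) with hZ
  have hμ : 0 < μ := by positivity
  have hexp1 : Real.exp (-μ) < 1 := Real.exp_lt_one_iff.mpr (neg_lt_zero.mpr hμ)
  have hexppos : 0 < Real.exp (-μ) := Real.exp_pos _
  have hZpos : 0 < Z := by rw [hZ]; linarith
  have hZle : Z ≤ 1 := by rw [hZ]; linarith
  have hinvZ : 1 ≤ 1 / Z := by rw [le_div_iff₀ hZpos]; linarith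
  set q1 : ℤ → ℝ := fun k => if 1 ≤ k then pz μ k else 0 with hq1
  have hq1nn : ∀ k, 0 ≤ q1 k := fun k => by
    rw [hq1]; dsimp only; split
    · exact pz_nonneg hμ.le _
    · exact le_rfl
  have hq1le : ∀ k, q1 k ≤ pz μ k := fun k => by
    rw [hq1]; dsimp only; split
    · exact le_rfl
    · exact pz_nonneg hμ.le _
  have hq1sum : Summable q1 := Summable.of_nonneg_of_le hq1nn hq1le (summable_pz hμ.le)
  set e1 : ℤ → ℝ := fun k => q1 k * (1 / Z - 1) with he1def
  set e2 : ℤ → ℝ := fun k => if k = 0 then Real.exp (-μ) else 0 with he2def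
  set e3 : ℤ → ℝ := fun k => |pz μ k - pz l k| with he3def
  set e4 : ℤ → ℝ := fun k => |pz l k - pz l (k - n)| with he4def
  have he1 : Summable e1 := hq1sum.mul_right _
  have he2 : Summable e2 := by
    apply summable_of_ne_finset_zero (s := ({0} : Finset ℤ))
    intro b hb
    rw [he2def]
    exact if_neg (by simpa using hb)
  have he3 : Summable e3 := summable_pdiff hμ.le hl.le
  have he4 : Summable e4 := by
    have := summable_absdiff' hl.le n
    exact this.congr fun k => abs_sub_comm _ _
  have he2_eq : ∀ k : ℤ, |q1 k - pz μ k| = e2 k := by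
    intro k
    rw [hq1, he2def]
    dsimp only
    by_cases h1 : 1 ≤ k
    · rw [if_pos h1, if_neg (by omega : ¬ k = 0), sub_self, abs_zero]
    · by_cases h0 : 0 ≤ k
      · have hk0 : k = 0 := by omega
        subst hk0
        rw [if_neg h1, if_pos rfl]
        have : pz μ 0 = Real.exp (-μ) := by
          simp [pz, liftZ, pois]
        rw [this, zero_sub, abs_neg, abs_of_pos hexppos]
      · have hpz : pz μ k = 0 := by
          simp only [pz, liftZ]
          exact if_neg h0
        rw [if_neg h1, if_neg (by omega : ¬ k = 0), hpz, sub_zero, abs_zero]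
  have hpt : ∀ k : ℤ, |q1 k / Z - pz l (k - n)| ≤ e1 k + e2 k + e3 k + e4 k := by
    intro k
    have h12 : |q1 k / Z - q1 k| = e1 k := by
      rw [he1def]
      dsimp only
      rw [show q1 k / Z - q1 k = q1 k * (1 / Z - 1) by rw [mul_sub, mul_one_div, mul_one]]
      exact abs_of_nonneg (mul_nonneg (hq1nn k) (by linarith))
    calc |q1 k / Z - pz l (k - n)|
        ≤ |q1 k / Z - pz μ k| + |pz μ k - pz l (k - n)| := abs_sub_le _ _ _
      _ ≤ (|q1 k / Z - q1 k| + |q1 k - pz μ k|) + (|pz μ k - pz l k| + |pz l k - pz l (k - n)|) :=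
          add_le_add (abs_sub_le _ _ _) (abs_sub_le _ _ _)
      _ = e1 k + e2 k + e3 k + e4 k := by rw [h12, he2_eq k]; ring
  calc ∑' k : ℤ, |q1 k / Z - pz l (k - n)|
      ≤ ∑' k : ℤ, (e1 k + e2 k + e3 k + e4 k) := by
        refine Summable.tsum_le_tsum hpt ?_ (((he1.add he2).add he3).add he4)
        exact Summable.of_nonneg_of_le (fun k => abs_nonneg _) hpt
          (((he1.add he2).add he3).add he4)
    _ = (∑' k, e1 k) + (∑' k, e2 k) + (∑' k, e3 k) + (∑' k, e4 k) := by
        rw [Summable.tsum_add ((he1.add he2).add he3) he4, Summable.tsum_add (he1.add he2) he3, Summable.tsum_add he1 he2]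
    _ ≤ (1 / Z - 1) + Real.exp (-μ) + c * (Real.sqrt l / l) + |(n : ℝ)| * (Real.sqrt l / l) := by
        have b1 : (∑' k, e1 k) ≤ 1 / Z - 1 := by
          rw [he1def]
          dsimp only
          rw [tsum_mul_right]
          have hts : ∑' k, q1 k ≤ 1 := by
            rw [← (hasSum_pz hμ.le).tsum_eq]
            exact Summable.tsum_le_tsum hq1le hq1sum (summable_pz hμ.le)
          calc (∑' k, q1 k) * (1 / Z - 1) ≤ 1 * (1 / Z - 1) :=
                mul_le_mul_of_nonneg_right hts (by linarith)
            _ = 1 / Z - 1 := one_mul _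
        have b2 : (∑' k, e2 k) = Real.exp (-μ) := by
          rw [he2def]
          rw [tsum_eq_single (0 : ℤ) (fun b hb => if_neg hb)]
          exact if_pos rfl
        have b3 : (∑' k, e3 k) ≤ c * (Real.sqrt l / l) := tsum_param_le hc.le hl
        have b4 : (∑' k, e4 k) ≤ |(n : ℝ)| * (Real.sqrt l / l) := by
          rw [he4def]
          calc ∑' (k : ℤ), |pz l k - pz l (k - n)|
              = ∑' (k : ℤ), |pz l (k - n) - pz l k| := tsum_congr fun k => abs_sub_comm _ _
            _ ≤ |(n : ℝ)| * (Real.sqrt l / l) := tsum_Dint hl n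
        linarith
    _ = (1 / Z - 1) + Real.exp (-μ) + (c + |(n : ℝ)|) * (Real.sqrt l / l) := by ring

theorem stmt_0 (ρ : ℝ) (hρ : 0 < ρ) (n : ℤ) :
    Tendsto (fun α : ℝ =>
      ∑' k : ℤ,
        |(if 1 ≤ k then
            Real.exp (-(2 * (α + ρ))) * (2 * (α + ρ)) ^ k.toNat /
              ((Nat.factorial k.toNat : ℝ) * (1 - Real.exp (-(2 * (α + ρ)))))
          else 0)
          - (if n ≤ k then
            Real.exp (-(2 * α)) * (2 * α) ^ (k - n).toNat /
              (Nat.factorial (k - n).toNat : ℝ)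
          else 0)|)
      atTop (nhds 0) := by
  set G : ℝ → ℝ := fun α => (1 / (1 - Real.exp (-(2 * ρ + 2 * α))) - 1)
    + Real.exp (-(2 * ρ + 2 * α))
    + (2 * ρ + |(n : ℝ)|) * (Real.sqrt (2 * α) / (2 * α)) with hG
  refine squeeze_zero' (g := G)
    (Filter.Eventually.of_forall fun α => tsum_nonneg fun k => abs_nonneg _) ?_ ?_
  · filter_upwards [eventually_gt_atTop (0 : ℝ)] with α hα
    have hc : (0 : ℝ) < 2 * ρ := by linarith
    have hl : (0 : ℝ) < 2 * α := by linarith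
    have hterm : ∀ k : ℤ, (if 1 ≤ k then
        Real.exp (-(2 * (α + ρ))) * (2 * (α + ρ)) ^ k.toNat /
          ((Nat.factorial k.toNat : ℝ) * (1 - Real.exp (-(2 * (α + ρ)))))
        else 0) =
        (if 1 ≤ k then pz (2 * ρ + 2 * α) k else 0) / (1 - Real.exp (-(2 * ρ + 2 * α))) := by
      intro k
      have h2 : 2 * (α + ρ) = 2 * ρ + 2 * α := by ring
      rw [h2]
      by_cases h1 : 1 ≤ k
      · rw [if_pos h1, if_pos h1]
        have hpz : pz (2 * ρ + 2 * α) k = pois (2 * ρ + 2 * α) k.toNat := by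
          simp only [pz, liftZ]
          rw [if_pos (by omega : (0:ℤ) ≤ k)]
        rw [hpz]
        simp only [pois]
        rw [div_div]
      · rw [if_neg h1, if_neg h1, zero_div]
    have hterm2 : ∀ k : ℤ, (if n ≤ k then
        Real.exp (-(2 * α)) * (2 * α) ^ (k - n).toNat / (Nat.factorial (k - n).toNat : ℝ)
        else 0) = pz (2 * α) (k - n) := by
      intro k
      simp only [pz, liftZ]
      by_cases hn : n ≤ k
      · rw [if_pos hn, if_pos (by omega : (0:ℤ) ≤ k - n)]
        simp only [pois]
      · rw [if_neg hn, if_neg (by omega : ¬ (0:ℤ) ≤ k - n)]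
    calc ∑' k : ℤ, |(if 1 ≤ k then
            Real.exp (-(2 * (α + ρ))) * (2 * (α + ρ)) ^ k.toNat /
              ((Nat.factorial k.toNat : ℝ) * (1 - Real.exp (-(2 * (α + ρ)))))
          else 0)
          - (if n ≤ k then
            Real.exp (-(2 * α)) * (2 * α) ^ (k - n).toNat /
              (Nat.factorial (k - n).toNat : ℝ)
          else 0)|
        = ∑' k : ℤ, |(if 1 ≤ k then pz (2 * ρ + 2 * α) k else 0) /
            (1 - Real.exp (-(2 * ρ + 2 * α))) - pz (2 * α) (k - n)| :=
          tsum_congr fun k => by rw [hterm k, hterm2 k]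
      _ ≤ G α := main_bound hc hl n
  · have hlin : Tendsto (fun α : ℝ => 2 * ρ + 2 * α) atTop atTop := by
      apply tendsto_atTop_add_const_left
      exact Tendsto.const_mul_atTop (by norm_num : (0:ℝ) < 2) tendsto_id
    have hexp : Tendsto (fun α : ℝ => Real.exp (-(2 * ρ + 2 * α))) atTop (nhds 0) :=
      Real.tendsto_exp_neg_atTop_nhds_zero.comp hlin
    have hZt : Tendsto (fun α : ℝ => 1 / (1 - Real.exp (-(2 * ρ + 2 * α))) - 1) atTop (nhds 0) := by
      have h1 : Tendsto (fun α : ℝ => 1 - Real.exp (-(2 * ρ + 2 * α))) atTop (nhds 1) := by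
        simpa using (tendsto_const_nhds (x := (1:ℝ)) (f := atTop)).sub hexp
      have h2 := (tendsto_const_nhds (x := (1:ℝ)) (f := atTop)).div h1 one_ne_zero
      simpa using h2.sub (tendsto_const_nhds (x := (1:ℝ)) (f := atTop))
    have hsq : Tendsto (fun α : ℝ => Real.sqrt (2 * α) / (2 * α)) atTop (nhds 0) := by
      have heq : (fun α : ℝ => Real.sqrt (2 * α) / (2 * α)) =
          fun α : ℝ => 1 / Real.sqrt (2 * α) := funext fun α => Real.sqrt_div_self'
      rw [heq]
      have hs : Tendsto Real.sqrt atTop atTop := by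
        refine tendsto_atTop_atTop.mpr fun b => ⟨(max b 0) ^ 2, fun a ha => ?_⟩
        calc b ≤ max b 0 := le_max_left _ _
          _ = Real.sqrt ((max b 0) ^ 2) := (Real.sqrt_sq (le_max_right _ _)).symm
          _ ≤ Real.sqrt a := Real.sqrt_le_sqrt ha
      have h2 : Tendsto (fun α : ℝ => 2 * α) atTop atTop :=
        Tendsto.const_mul_atTop (by norm_num : (0:ℝ) < 2) tendsto_id
      exact (tendsto_const_nhds (x := (1:ℝ))).div_atTop (hs.comp h2)
    have := (hZt.add hexp).add ((tendsto_const_nhds (x := 2 * ρ + |(n : ℝ)|)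
      (f := atTop)).mul hsq)
    rw [hG]
    simpa using this
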